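/- Let n ≥ 2 and k ≥ 1 be natural numbers with k ≤ n, and for 0 ≤ t ≤ n-1 define p_t = Σ_{i=1}^{min(k,n-t)} C(k,i)·C(t+1,i)·C(n-t,i)/C(n,i)² (a positive real). Then Σ_{t=0}^{n-1} 1/p_t ≤ (2n²/(k(n+1)))·H_n ≤ (2n/k)·(Real.log n + 1), where H_n = Σ_{i=1}^{n} 1/i is the n-th harmonic number and C denotes the binomial coefficient. -/

import Mathlib

/-- Mixing time of the k-random-transposition shuffle: with
`p_t = ∑_{i=1}^{min(k,n-t)} C(k,i) C(t+1,i) C(n-t,i) / C(n,i)²`, the expected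
stopping time `∑_{t=0}^{n-1} 1/p_t` is at most `(2n²/(k(n+1))) · H_n`, which is
itself at most `(2n/k)(log n + 1)`. -/
theorem kRTS_mixing_time_bound
    (n k : ℕ) (hn : 2 ≤ n) (hk : 1 ≤ k) (hkn : k ≤ n)
    (p : ℕ → ℝ)
    (hp : ∀ t, p t = ∑ i ∈ Finset.Icc 1 (min k (n - t)),
        ((k.choose i : ℝ) * ((t + 1).choose i : ℝ) * ((n - t).choose i : ℝ))
          / ((n.choose i : ℝ)) ^ 2) :
    (∑ t ∈ Finset.range n, 1 / p t
        ≤ (2 * (n : ℝ) ^ 2 / ((k : ℝ) * ((n : ℝ) + 1)))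
            * ∑ i ∈ Finset.range n, (1 : ℝ) / ((i : ℝ) + 1))
    ∧ (2 * (n : ℝ) ^ 2 / ((k : ℝ) * ((n : ℝ) + 1)))
          * ∑ i ∈ Finset.range n, (1 : ℝ) / ((i : ℝ) + 1)
        ≤ (2 * (n : ℝ) / (k : ℝ)) * (Real.log n + 1) := by
  have hn0 : (0:ℝ) < n := by positivity
  have hk0 : (0:ℝ) < k := by exact_mod_cast hk
  have hH : (0:ℝ) ≤ ∑ i ∈ Finset.range n, (1 : ℝ) / ((i : ℝ) + 1) := by
    apply Finset.sum_nonneg; intro i _; positivity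
  constructor
  · -- main bound
    have key : ∀ t ∈ Finset.range n,
        1 / p t ≤ (n:ℝ)^2 / ((k:ℝ) * ((t:ℝ)+1) * ((n:ℝ) - t)) := by
      intro t ht
      rw [Finset.mem_range] at ht
      have hnt : 1 ≤ n - t := Nat.le_sub_of_add_le (by omega)
      have hcast : ((n - t : ℕ) : ℝ) = (n:ℝ) - t := by
        rw [Nat.cast_sub ht.le]
      have hlb : (k:ℝ) * ((t:ℝ)+1) * ((n:ℝ) - t) / (n:ℝ)^2 ≤ p t := by
        rw [hp t]
        have h1 : 1 ∈ Finset.Icc 1 (min k (n - t)) := by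
          simp [le_min_iff, hk, hnt]
        calc (k:ℝ) * ((t:ℝ)+1) * ((n:ℝ) - t) / (n:ℝ)^2
            = ((k.choose 1 : ℝ) * ((t + 1).choose 1 : ℝ) * ((n - t).choose 1 : ℝ))
              / ((n.choose 1 : ℝ)) ^ 2 := by
              simp [Nat.choose_one_right, hcast]
          _ ≤ _ := by
              apply Finset.single_le_sum (f := fun i => ((k.choose i : ℝ) * ((t + 1).choose i : ℝ) * ((n - t).choose i : ℝ)) / ((n.choose i : ℝ)) ^ 2) _ h1
              intro i _; positivity
      have hpos : (0:ℝ) < (k:ℝ) * ((t:ℝ)+1) * ((n:ℝ) - t) / (n:ℝ)^2 := by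
        have : (0:ℝ) < (n:ℝ) - t := by
          rw [← hcast]; exact_mod_cast hnt
        positivity
      calc 1 / p t ≤ 1 / ((k:ℝ) * ((t:ℝ)+1) * ((n:ℝ) - t) / (n:ℝ)^2) :=
            one_div_le_one_div_of_le hpos hlb
        _ = (n:ℝ)^2 / ((k:ℝ) * ((t:ℝ)+1) * ((n:ℝ) - t)) := by
            rw [one_div_div]
    calc ∑ t ∈ Finset.range n, 1 / p t
        ≤ ∑ t ∈ Finset.range n, (n:ℝ)^2 / ((k:ℝ) * ((t:ℝ)+1) * ((n:ℝ) - t)) :=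
          Finset.sum_le_sum key
      _ = ∑ t ∈ Finset.range n, ((n:ℝ)^2 / ((k:ℝ) * ((n:ℝ)+1)))
            * (1/((t:ℝ)+1) + 1/((n:ℝ) - t)) := by
          apply Finset.sum_congr rfl
          intro t ht
          rw [Finset.mem_range] at ht
          have h1 : (0:ℝ) < (t:ℝ)+1 := by positivity
          have h2 : (0:ℝ) < (n:ℝ) - t := by
            have : (t:ℝ) < n := by exact_mod_cast ht
            linarith
          field_simp
          ring
      _ = ((n:ℝ)^2 / ((k:ℝ) * ((n:ℝ)+1)))
            * ((∑ t ∈ Finset.range n, 1/((t:ℝ)+1))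
              + ∑ t ∈ Finset.range n, 1/((n:ℝ) - t)) := by
          rw [← Finset.mul_sum, Finset.sum_add_distrib]
      _ = (2 * (n : ℝ) ^ 2 / ((k : ℝ) * ((n : ℝ) + 1)))
            * ∑ i ∈ Finset.range n, (1 : ℝ) / ((i : ℝ) + 1) := by
          have hrefl : ∑ t ∈ Finset.range n, 1/((n:ℝ) - t)
              = ∑ i ∈ Finset.range n, (1 : ℝ) / ((i : ℝ) + 1) := by
            rw [← Finset.sum_range_reflect (fun i => (1:ℝ)/((i:ℝ)+1)) n]
            apply Finset.sum_congr rfl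
            intro t ht
            rw [Finset.mem_range] at ht
            congr 1
            have : ((n - 1 - t : ℕ) : ℝ) = (n:ℝ) - 1 - t := by
              have : n - 1 - t = n - (1 + t) := by omega
              rw [this, Nat.cast_sub (by omega)]
              push_cast; ring
            rw [this]; ring
          rw [hrefl]; ring
  · -- second bound
    have hharm : ∑ i ∈ Finset.range n, (1 : ℝ) / ((i : ℝ) + 1) ≤ Real.log n + 1 := by
      have := harmonic_le_one_add_log n
      have hcast : ((harmonic n : ℚ) : ℝ) = ∑ i ∈ Finset.range n, (1 : ℝ) / ((i : ℝ) + 1) := by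
        rw [harmonic]
        push_cast
        apply Finset.sum_congr rfl
        intro i _
        rw [one_div]
      calc ∑ i ∈ Finset.range n, (1 : ℝ) / ((i : ℝ) + 1) = ((harmonic n : ℚ) : ℝ) := hcast.symm
        _ ≤ 1 + Real.log n := by exact_mod_cast this
        _ = Real.log n + 1 := by ring
    have hcoef : 2 * (n : ℝ) ^ 2 / ((k : ℝ) * ((n : ℝ) + 1)) ≤ 2 * (n : ℝ) / (k : ℝ) := by
      rw [div_le_div_iff₀ (by positivity) hk0]
      nlinarith
    have hlog : (0:ℝ) ≤ Real.log n + 1 := by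
      have : (0:ℝ) ≤ Real.log n := Real.log_nonneg (by exact_mod_cast Nat.one_le_of_lt hn)
      linarith
    exact mul_le_mul hcoef hharm hH (by positivity)
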